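/- For a prime p and positive integer s, let V be a 2s-dimensional vector space over F_p and {H₀, H₁, …, H_{p^s}} a spread of V (a family of p^s+1 s-dimensional subspaces pairwise intersecting only in 0). Then {H₁∖{0}, …, H_{p^s}∖{0}} is a (1, p^s) LP-packing in the additive group V relative to H₀, and every nontrivial character of V is principal on exactly one of H₀,…,H_{p^s}. -/

import Mathlib

open Finset BigOperators

variable {G : Type*}

/-- Number of ordered pairs `(x,y)` with `x,y ∈ D`, `x ≠ y`, `x * y⁻¹ = g`. -/
noncomputable def diffCount [Group G] (D : Set G) (g : G) : ℕ :=
  Nat.card {p : G × G // p.1 ∈ D ∧ p.2 ∈ D ∧ p.1 ≠ p.2 ∧ p.1 * p.2⁻¹ = g}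

/-- `D` is a `(v,k,λ,μ)` partial difference set in `G`. -/
def IsPDS [Group G] (D : Set G) (v k : ℕ) (l m : ℤ) : Prop :=
  Nat.card G = v ∧ Nat.card D = k ∧
    ∀ g : G, g ≠ 1 →
      (g ∈ D → (diffCount D g : ℤ) = l) ∧ (g ∉ D → (diffCount D g : ℤ) = m)

/-- A regular PDS: a PDS avoiding the identity and closed under inversion. -/
def IsRegularPDS [Group G] (D : Set G) (v k : ℕ) (l m : ℤ) : Prop :=
  IsPDS D v k l m ∧ (1 : G) ∉ D ∧ D⁻¹ = D

/-- A regular `(n,r)` Latin square type PDS. -/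
def IsLatinPDS [Group G] (D : Set G) (n r : ℕ) : Prop :=
  IsRegularPDS D (n ^ 2) (r * (n - 1)) ((n : ℤ) + (r : ℤ) ^ 2 - 3 * r) ((r : ℤ) ^ 2 - r)

/-- A regular `(n,r)` negative Latin square type PDS. -/
def IsNegLatinPDS [Group G] (D : Set G) (n r : ℕ) : Prop :=
  IsRegularPDS D (n ^ 2) (r * (n + 1)) (-(n : ℤ) + (r : ℤ) ^ 2 + 3 * r) ((r : ℤ) ^ 2 + r)

/-- Character sum `χ(D) = ∑_{d ∈ D} χ(d)`. -/
noncomputable def charSum [Group G] (χ : G →* ℂˣ) (D : Set G) : ℂ :=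
  ∑ᶠ d ∈ D, (χ d : ℂ)

/-- The multiset of character sums `{χ(P 0), …, χ(P (t-1))}`. -/
noncomputable def charMultiset [Group G] {t : ℕ} (χ : G →* ℂˣ) (P : Fin t → Set G) :
    Multiset ℂ :=
  (Finset.univ.val : Multiset (Fin t)).map fun i => charSum χ (P i)

/-- `χ` is principal on the subgroup `U`. -/
def IsPrincipalOn [Group G] (χ : G →* ℂˣ) (U : Subgroup G) : Prop :=
  ∀ u ∈ U, χ u = 1

/-- A `(c,t)` LP-packing in `G` relative to `U`. -/
def IsLPPacking [CommGroup G] (c t : ℕ) (P : Fin t → Set G) (U : Subgroup G) : Prop :=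
  Nat.card G = t ^ 2 * c ^ 2 ∧ Nat.card U = t * c ∧
    (∀ i, IsLatinPDS (P i) (t * c) c) ∧
    (∀ i j, i ≠ j → Disjoint (P i) (P j)) ∧
    (⋃ i, P i) = Set.univ \ (U : Set G)

/-- A `(c,t-1)` NLP-packing in `G`. -/
def IsNLPPacking [CommGroup G] (c t : ℕ) (P : Fin (t - 1) → Set G) : Prop :=
  Nat.card G = t ^ 2 * c ^ 2 ∧
    (∀ i, IsNegLatinPDS (P i) (t * c) c) ∧
    IsNegLatinPDS (Set.univ \ ({1} ∪ ⋃ i, P i)) (t * c) (c - 1)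

/-- A `(c,t)` LP-partition in `G − V` relative to `H`. -/
def IsLPPartition [CommGroup G] (c t : ℕ) (R : Fin t → Set G) (V H : Subgroup G) : Prop :=
  Nat.card G = t ^ 2 * c ^ 2 ∧ Nat.card V = t * c ^ 2 ∧ H ≤ V ∧
    (∀ i, Nat.card (R i) = (t - 1) * c ^ 2) ∧
    (∀ i j, i ≠ j → Disjoint (R i) (R j)) ∧
    (⋃ i, R i) = Set.univ \ (V : Set G) ∧
    ∀ χ : G →* ℂˣ, χ ≠ 1 →
      (IsPrincipalOn χ V → charMultiset χ R = Multiset.replicate t (-(c : ℂ) ^ 2)) ∧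
      (¬ IsPrincipalOn χ V → IsPrincipalOn χ H →
        charMultiset χ R = Multiset.replicate t 0) ∧
      (¬ IsPrincipalOn χ H →
        charMultiset χ R = ((t : ℂ) - 1) * (c : ℂ) ::ₘ Multiset.replicate (t - 1) (-(c : ℂ)))

section AuxLemmas

variable {A : Type*} [AddCommGroup A]

lemma aux_mem_ofAdd_image {S : Set A} {g : Multiplicative A} :
    g ∈ ⇑Multiplicative.ofAdd '' S ↔ g.toAdd ∈ S := by
  constructor
  · rintro ⟨x, hx, rfl⟩; simpa using hx
  · intro h; exact ⟨g.toAdd, h, by simp⟩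

lemma aux_toAdd_eq {x y : Multiplicative A} {v : A} (h : x * y⁻¹ = Multiplicative.ofAdd v) :
    x.toAdd - y.toAdd = v := by
  have := congrArg Multiplicative.toAdd h
  simpa [sub_eq_add_neg] using this

lemma aux_diffCount_notmem (W : AddSubgroup A) {v : A}
    (hv : v ∉ ((W : Set A) \ {0})) :
    diffCount (⇑Multiplicative.ofAdd '' ((W : Set A) \ {0})) (Multiplicative.ofAdd v) = 0 := by
  rw [diffCount, Nat.card_eq_zero]
  left
  constructor
  rintro ⟨⟨x, y⟩, hx, hy, hne, heq⟩
  rw [aux_mem_ofAdd_image] at hx hy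
  refine hv ⟨?_, ?_⟩
  · have h2 := aux_toAdd_eq heq
    rw [← h2]
    exact W.sub_mem hx.1 hy.1
  · simp only [Set.mem_singleton_iff]
    intro h0
    apply hne
    have h2 := aux_toAdd_eq heq
    rw [h0, sub_eq_zero] at h2
    exact Multiplicative.toAdd.injective h2

lemma aux_diffCount_mem (W : AddSubgroup A) {v : A} (hv : v ∈ W) (h0 : v ≠ 0) :
    diffCount (⇑Multiplicative.ofAdd '' ((W : Set A) \ {0})) (Multiplicative.ofAdd v)
      = ((W : Set A) \ {0, v}).ncard := by
  rw [diffCount, ← Nat.card_coe_set_eq]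
  refine Nat.card_eq_of_bijective (fun z => ⟨z.1.1.toAdd, ?_⟩) ⟨?_, ?_⟩
  · obtain ⟨⟨x, y⟩, hx, hy, hne, heq⟩ := z
    rw [aux_mem_ofAdd_image] at hx hy
    have h2 := aux_toAdd_eq heq
    refine ⟨hx.1, ?_⟩
    simp only [Set.mem_insert_iff, Set.mem_singleton_iff, not_or]
    refine ⟨by simpa using hx.2, ?_⟩
    intro hxv
    apply hy.2
    simp only [Set.mem_singleton_iff]
    have : Multiplicative.toAdd y = Multiplicative.toAdd x - v := by
      rw [← h2]; abel
    rw [this, hxv, sub_self]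
  · rintro ⟨⟨x, y⟩, hx, hy, hne, heq⟩ ⟨⟨x', y'⟩, hx', hy', hne', heq'⟩ hab
    simp only [Subtype.mk.injEq] at hab ⊢
    have hxx : x = x' := Multiplicative.toAdd.injective hab
    subst hxx
    have : y = y' := by
      have e1 := aux_toAdd_eq heq
      have e2 := aux_toAdd_eq heq'
      apply Multiplicative.toAdd.injective
      exact sub_right_injective (e1.trans e2.symm)
    rw [this]
  · rintro ⟨x, hxW, hx0v⟩
    simp only [Set.mem_insert_iff, Set.mem_singleton_iff, not_or] at hx0v
    refine ⟨⟨(Multiplicative.ofAdd x, Multiplicative.ofAdd (x - v)), ?_, ?_, ?_, ?_⟩, ?_⟩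
    · rw [aux_mem_ofAdd_image]; exact ⟨by simpa using hxW, by simpa using hx0v.1⟩
    · rw [aux_mem_ofAdd_image]
      refine ⟨by simpa using W.sub_mem hxW hv, ?_⟩
      simp only [toAdd_ofAdd, Set.mem_singleton_iff]
      intro h; exact hx0v.2 (by rwa [sub_eq_zero] at h)
    · intro h
      have := congrArg Multiplicative.toAdd h
      simp only [toAdd_ofAdd] at this
      exact h0 (sub_eq_self.mp this.symm)
    · apply Multiplicative.toAdd.injective
      simp [sub_eq_add_neg]
    · simp

end AuxLemmas

theorem stmt_5 (p s : ℕ) (hp : p.Prime) (hs : 0 < s)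
    (V : Type*) [AddCommGroup V] [Module (ZMod p) V] [Finite V]
    (hdim : Module.finrank (ZMod p) V = 2 * s)
    (H : Fin (p ^ s + 1) → Submodule (ZMod p) V)
    (hdims : ∀ i, Module.finrank (ZMod p) (H i) = s)
    (hspread : ∀ i j, i ≠ j → H i ⊓ H j = ⊥) :
    IsLPPacking 1 (p ^ s)
      (fun i : Fin (p ^ s) =>
        ⇑Multiplicative.ofAdd '' ((H i.succ : Set V) \ {0}))
      (AddSubgroup.toSubgroup (H 0).toAddSubgroup) ∧
    ∀ χ : Multiplicative V →* ℂˣ, χ ≠ 1 →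
      ∃! i : Fin (p ^ s + 1),
        IsPrincipalOn χ (AddSubgroup.toSubgroup (H i).toAddSubgroup) := by
  classical
  haveI : Fact p.Prime := ⟨hp⟩
  haveI := Fintype.ofFinite V
  have hq2 : 2 ≤ (p ^ s) := Nat.one_lt_pow hs.ne' hp.one_lt
  have hcardV : Nat.card V = (p ^ s) ^ 2 := by
    rw [Nat.card_eq_fintype_card, Module.card_eq_pow_finrank (K := ZMod p), ZMod.card, hdim,
      ← pow_mul, mul_comm s 2]
  have hcardHi : ∀ i, Nat.card (H i) = (p ^ s) := by
    intro i
    rw [Nat.card_eq_fintype_card, Module.card_eq_pow_finrank (K := ZMod p), ZMod.card, hdims]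
  have hncardHi : ∀ i, (H i : Set V).ncard = (p ^ s) := by
    intro i
    rw [← Nat.card_coe_set_eq, ← hcardHi i]
    exact Nat.card_congr (Equiv.subtypeEquivRight fun _ => Iff.rfl)
  have h0mem : ∀ i, (0 : V) ∈ H i := fun i => (H i).zero_mem
  have hdisjS : ∀ i j : Fin ((p ^ s) + 1), i ≠ j →
      Disjoint ((H i : Set V) \ {0}) ((H j : Set V) \ {0}) := by
    intro i j hij
    rw [Set.disjoint_left]
    rintro v ⟨hvi, hv0⟩ ⟨hvj, _⟩
    apply hv0
    have hmem : v ∈ H i ⊓ H j := ⟨hvi, hvj⟩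
    rw [hspread i j hij] at hmem
    simpa using hmem
  -- covering property
  have hcover : ∀ v : V, v ≠ 0 → ∃ i, v ∈ H i := by
    intro v hv
    by_contra hcon
    push_neg at hcon
    set F : Fin ((p ^ s) + 1) → Finset V := fun i => (Set.toFinite ((H i : Set V) \ {0})).toFinset
      with hF
    have hFmem : ∀ i x, x ∈ F i ↔ x ∈ H i ∧ x ≠ 0 := by
      intro i x
      show x ∈ (Set.toFinite ((H i : Set V) \ {0})).toFinset ↔ _
      rw [Set.Finite.mem_toFinset]
      simp
    have hFcard : ∀ i, (F i).card = (p ^ s) - 1 := by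
      intro i
      show (Set.toFinite ((H i : Set V) \ {0})).toFinset.card = _
      rw [← Set.ncard_eq_toFinset_card _ (Set.toFinite _),
        Set.ncard_diff (by simp [h0mem i]), hncardHi, Set.ncard_singleton]
    have hsub : Finset.univ.biUnion F ⊆ (Finset.univ.erase v).erase 0 := by
      intro x hx
      rw [Finset.mem_biUnion] at hx
      obtain ⟨i, _, hxi⟩ := hx
      rw [hFmem] at hxi
      rw [Finset.mem_erase, Finset.mem_erase]
      exact ⟨hxi.2, fun h => hcon i (h ▸ hxi.1), Finset.mem_univ x⟩
    have hbc : (Finset.univ.biUnion F).card = ((p ^ s) + 1) * ((p ^ s) - 1) := by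
      rw [Finset.card_biUnion]
      · simp [hFcard, Finset.sum_const, Finset.card_univ]
      · intro i _ j _ hij
        show Disjoint (Set.toFinite ((H i : Set V) \ {0})).toFinset
          (Set.toFinite ((H j : Set V) \ {0})).toFinset
        rw [Set.Finite.disjoint_toFinset]
        exact hdisjS i j hij
    have hTc : ((Finset.univ.erase v).erase 0).card = (p ^ s) ^ 2 - 2 := by
      rw [Finset.card_erase_of_mem, Finset.card_erase_of_mem (Finset.mem_univ v)]
      · rw [Finset.card_univ, ← Nat.card_eq_fintype_card, hcardV]
        omega
      · exact Finset.mem_erase.mpr ⟨fun h => hv h.symm, Finset.mem_univ 0⟩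
    have hle := Finset.card_le_card hsub
    rw [hbc, hTc] at hle
    obtain ⟨m, hm⟩ : ∃ m, (p ^ s) = m + 2 := ⟨(p ^ s) - 2, by omega⟩
    rw [hm] at hle
    have e1 : (m + 2 + 1) * (m + 2 - 1) = m * m + 4 * m + 3 := by
      have : m + 2 - 1 = m + 1 := by omega
      rw [this]; ring
    have e2 : (m + 2) ^ 2 = m * m + 4 * m + 4 := by ring
    omega
  have hsucc0 : ∀ i : Fin (p ^ s), (Fin.succ i : Fin ((p ^ s) + 1)) ≠ 0 := fun i => Fin.succ_ne_zero i
  constructor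
  · refine ⟨?_, ?_, ?_, ?_, ?_⟩
    · rw [Nat.card_congr Multiplicative.toAdd, hcardV]; ring
    · rw [mul_one]
      exact (Nat.card_congr (Equiv.subtypeEquiv Multiplicative.toAdd fun x => Iff.rfl)).trans
        (hcardHi 0)
    · intro i
      show IsLatinPDS (⇑Multiplicative.ofAdd '' ((H i.succ : Set V) \ {0})) (p ^ s * 1) 1
      refine ⟨⟨?_, ?_, ?_⟩, ?_, ?_⟩
      · rw [Nat.card_congr Multiplicative.toAdd, hcardV, mul_one]
      · rw [Nat.card_coe_set_eq,
          Set.ncard_image_of_injective _ (Multiplicative.ofAdd.injective),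
          Set.ncard_diff (by simp [h0mem]), hncardHi, Set.ncard_singleton, mul_one, one_mul]
      · intro g hg
        have hv0 : g.toAdd ≠ 0 := by
          intro h
          apply hg
          apply Multiplicative.toAdd.injective
          simpa using h
        have hgv : g = Multiplicative.ofAdd g.toAdd := by simp
        constructor
        · intro hgD
          rw [aux_mem_ofAdd_image] at hgD
          rw [hgv, show ((H i.succ : Set V) \ {0}) = (((H i.succ).toAddSubgroup : Set V) \ {0}) from rfl,
            aux_diffCount_mem (H i.succ).toAddSubgroup hgD.1 hv0]
          rw [show (((H i.succ).toAddSubgroup : Set V)) = (H i.succ : Set V) from rfl]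
          rw [Set.ncard_diff (by
            intro x hx
            simp only [Set.mem_insert_iff, Set.mem_singleton_iff] at hx
            rcases hx with rfl | rfl
            · exact h0mem _
            · exact hgD.1), hncardHi, Set.ncard_pair (Ne.symm hv0)]
          push_cast [Nat.cast_sub (by omega : 2 ≤ (p ^ s))]
          ring
        · intro hgD
          rw [hgv, show ((H i.succ : Set V) \ {0}) = (((H i.succ).toAddSubgroup : Set V) \ {0}) from rfl,
            aux_diffCount_notmem (H i.succ).toAddSubgroup (by
              intro hmem
              apply hgD
              rw [hgv] at *
              rw [aux_mem_ofAdd_image]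
              exact hmem)]
          norm_num
      · rw [aux_mem_ofAdd_image]
        simp
      · ext g
        rw [Set.mem_inv, aux_mem_ofAdd_image, aux_mem_ofAdd_image]
        have : (g⁻¹).toAdd = -g.toAdd := rfl
        rw [this]
        simp only [Set.mem_diff, SetLike.mem_coe, Set.mem_singleton_iff, neg_eq_zero]
        constructor
        · rintro ⟨h1, h2⟩; exact ⟨by simpa using (H i.succ).neg_mem h1, h2⟩
        · rintro ⟨h1, h2⟩; exact ⟨(H i.succ).neg_mem h1, h2⟩
    · intro i j hij
      rw [Set.disjoint_image_iff Multiplicative.ofAdd.injective]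
      exact hdisjS _ _ (fun h => hij (Fin.succ_injective _ h))
    · ext g
      simp only [Set.mem_iUnion, Set.mem_diff, Set.mem_univ, true_and]
      constructor
      · rintro ⟨i, hi⟩
        rw [aux_mem_ofAdd_image] at hi
        intro hU
        have hg0 : g.toAdd ∈ H 0 := hU
        have : g.toAdd ∈ H i.succ ⊓ H 0 := ⟨hi.1, hg0⟩
        rw [hspread _ _ (hsucc0 i)] at this
        exact hi.2 (by simpa using this)
      · intro hU
        have hg0 : g.toAdd ∉ H 0 := fun h => hU h
        have hgne : g.toAdd ≠ 0 := fun h => hg0 (h ▸ h0mem 0)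
        obtain ⟨i, hi⟩ := hcover g.toAdd hgne
        have hine : i ≠ 0 := fun h => hg0 (h ▸ hi)
        obtain ⟨j, rfl⟩ := Fin.eq_succ_of_ne_zero hine
        exact ⟨j, aux_mem_ofAdd_image.mpr ⟨hi, hgne⟩⟩
  · intro χ hχ
    set K : Submodule (ZMod p) V :=
      { carrier := {v : V | χ (Multiplicative.ofAdd v) = 1}
        add_mem' := by
          intro a b ha hb
          simp only [Set.mem_setOf_eq] at *
          rw [ofAdd_add, map_mul, ha, hb, mul_one]
        zero_mem' := by
          simp only [Set.mem_setOf_eq, ofAdd_zero, map_one]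
        smul_mem' := by
          intro c x hx
          simp only [Set.mem_setOf_eq] at *
          have hcx : c • x = (c.val : ℕ) • x := by
            rw [← Nat.cast_smul_eq_nsmul (ZMod p), ZMod.natCast_val, ZMod.cast_id]
          rw [hcx, ofAdd_nsmul, map_pow, hx, one_pow] } with hK
    have hKmem : ∀ v : V, v ∈ K ↔ χ (Multiplicative.ofAdd v) = 1 := fun v => Iff.rfl
    have hKiff : ∀ i, IsPrincipalOn χ (AddSubgroup.toSubgroup (H i).toAddSubgroup) ↔
        (H i : Set V) ⊆ (K : Set V) := by
      intro i
      constructor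
      · intro hpr v hv
        exact hpr (Multiplicative.ofAdd v) hv
      · intro hle u hu
        have := hle (show u.toAdd ∈ (H i : Set V) from hu)
        simpa [hKmem] using this
    have huniq : ∀ i j, i ≠ j → (H i : Set V) ⊆ K → (H j : Set V) ⊆ K → False := by
      intro i j hij hi hj
      have hi' : H i ≤ K := hi
      have hj' : H j ≤ K := hj
      have hsup : H i ⊔ H j = ⊤ := by
        apply Submodule.eq_top_of_finrank_eq
        have hre := Submodule.finrank_sup_add_finrank_inf_eq (H i) (H j)
        rw [hspread i j hij, hdims, hdims, finrank_bot] at hre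
        rw [hdim]
        omega
      have hKtop : K = ⊤ := top_unique (hsup ▸ sup_le hi' hj')
      apply hχ
      ext g
      have hg : g ∈ K := hKtop ▸ Submodule.mem_top
      rw [hKmem] at hg
      simpa using hg
    -- cardinality of K
    have hKcard : Nat.card K * p = (p ^ s) ^ 2 := by
      have hker : ∀ g : Multiplicative V, g ∈ χ.ker ↔ g.toAdd ∈ K := by
        intro g
        rw [MonoidHom.mem_ker, hKmem]
        simp
      haveI : Finite χ.range := Set.Finite.to_subtype (Set.finite_range χ)
      have hrange : Nat.card χ.range = p := by
        have h1 : ∀ x : χ.range, x ^ p = 1 := by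
          rintro ⟨x, g, rfl⟩
          have hg : g ^ p = 1 := by
            have hp0 : (p : ℕ) • g.toAdd = 0 := by
              rw [← Nat.cast_smul_eq_nsmul (ZMod p), ZMod.natCast_self, zero_smul]
            calc g ^ p = Multiplicative.ofAdd (p • g.toAdd) := by rw [ofAdd_nsmul]; simp
            _ = 1 := by rw [hp0, ofAdd_zero]
          apply Subtype.ext
          push_cast
          rw [← map_pow, hg, map_one]
        obtain ⟨g, hg⟩ := IsCyclic.exists_generator (α := χ.range)
        have hord : orderOf g ∣ p := orderOf_dvd_of_pow_eq_one (h1 g)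
        have hcard : orderOf g = Nat.card χ.range :=
          orderOf_eq_card_of_forall_mem_zpowers hg
        rw [hcard] at hord
        rcases (Nat.Prime.eq_one_or_self_of_dvd hp _ hord) with h1' | h1'
        · exfalso
          apply hχ
          haveI := (Nat.card_eq_one_iff_unique.mp h1').1
          ext x
          have : (⟨χ (Multiplicative.ofAdd x), ⟨Multiplicative.ofAdd x, rfl⟩⟩ : χ.range) = (⟨1, one_mem _⟩ : χ.range) :=
            Subsingleton.elim _ _
          simpa using congrArg Subtype.val this
        · exact h1'
      have hindex : χ.ker.index = p := by
        rw [Subgroup.index, ← hrange]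
        exact Nat.card_congr (QuotientGroup.quotientKerEquivRange χ).toEquiv
      have hmi := Subgroup.card_mul_index χ.ker
      rw [hindex] at hmi
      have hNk : Nat.card χ.ker = Nat.card K :=
        Nat.card_congr (Equiv.subtypeEquiv Multiplicative.toAdd hker)
      rw [hNk] at hmi
      rw [hmi, Nat.card_congr Multiplicative.toAdd, hcardV]
    -- existence
    have hex : ∃ i, (H i : Set V) ⊆ K := by
      by_contra hno
      push_neg at hno
      have hlt : ∀ i, Nat.card (H i ⊓ K : Submodule (ZMod p) V) ≤ p ^ (s - 1) := by
        intro i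
        have hltHK : (H i ⊓ K) < H i := by
          rcases lt_or_eq_of_le (inf_le_left : H i ⊓ K ≤ H i) with h | h
          · exact h
          · exfalso
            apply hno i
            intro x hx
            have hx' : x ∈ H i := hx
            rw [← h] at hx'
            exact hx'.2
        have hfr : Module.finrank (ZMod p) (H i ⊓ K : Submodule (ZMod p) V) < s := by
          rw [← hdims i]
          exact Submodule.finrank_lt_finrank_of_lt hltHK
        rw [Nat.card_eq_fintype_card, Module.card_eq_pow_finrank (K := ZMod p), ZMod.card]
        exact Nat.pow_le_pow_right hp.one_lt.le (by omega)
      -- counting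
      set F : Fin ((p ^ s) + 1) → Finset V :=
        fun i => (Set.toFinite (((H i ⊓ K : Submodule (ZMod p) V) : Set V) \ {0})).toFinset
        with hF
      have hFcard : ∀ i, (F i).card ≤ p ^ (s - 1) - 1 := by
        intro i
        show (Set.toFinite (((H i ⊓ K : Submodule (ZMod p) V) : Set V) \ {0})).toFinset.card ≤ _
        rw [← Set.ncard_eq_toFinset_card _ (Set.toFinite _),
          Set.ncard_diff (by simp : ({0} : Set V) ⊆ _), Set.ncard_singleton]
        refine Nat.sub_le_sub_right ?_ 1
        rw [← Nat.card_coe_set_eq]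
        calc Nat.card ((H i ⊓ K : Submodule (ZMod p) V) : Set V)
            = Nat.card (H i ⊓ K : Submodule (ZMod p) V) :=
              Nat.card_congr (Equiv.subtypeEquivRight fun _ => Iff.rfl)
        _ ≤ p ^ (s - 1) := hlt i
      set KF : Finset V := (Set.toFinite ((K : Set V) \ {0})).toFinset with hKF
      have hKFcard : KF.card = Nat.card K - 1 := by
        show (Set.toFinite ((K : Set V) \ {0})).toFinset.card = _
        rw [← Set.ncard_eq_toFinset_card _ (Set.toFinite _),
          Set.ncard_diff (by simp : ({0} : Set V) ⊆ _), Set.ncard_singleton,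
          ← Nat.card_coe_set_eq]
        exact congrArg (· - 1) (Nat.card_congr (Equiv.subtypeEquivRight fun _ => Iff.rfl))
      have hsub : KF ⊆ Finset.univ.biUnion F := by
        intro x hx
        rw [hKF, Set.Finite.mem_toFinset] at hx
        obtain ⟨hxK, hx0⟩ := hx
        simp only [Set.mem_singleton_iff] at hx0
        obtain ⟨i, hi⟩ := hcover x hx0
        rw [Finset.mem_biUnion]
        exact ⟨i, Finset.mem_univ i, by
          rw [hF, Set.Finite.mem_toFinset]
          exact ⟨⟨hi, hxK⟩, hx0⟩⟩
      have hble : KF.card ≤ ((p ^ s) + 1) * (p ^ (s - 1) - 1) := by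
        calc KF.card ≤ (Finset.univ.biUnion F).card := Finset.card_le_card hsub
        _ ≤ ∑ i, (F i).card := Finset.card_biUnion_le
        _ ≤ ∑ _i : Fin ((p ^ s) + 1), (p ^ (s - 1) - 1) := Finset.sum_le_sum fun i _ => hFcard i
        _ = ((p ^ s) + 1) * (p ^ (s - 1) - 1) := by
            rw [Finset.sum_const, Finset.card_univ, Fintype.card_fin, smul_eq_mul]
      rw [hKFcard] at hble
      -- arithmetic contradiction
      set b := p ^ (s - 1) with hb
      have hqb : (p ^ s) = p * b := by
        rw [hb, ← pow_succ']
        congr 1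
        omega
      have hcK : Nat.card K = p * b ^ 2 := by
        have h1 : Nat.card K * p = (p * b) ^ 2 := by rw [← hqb]; exact hKcard
        have h2 : (p * b) ^ 2 = (p * b ^ 2) * p := by ring
        rw [h2] at h1
        exact Nat.eq_of_mul_eq_mul_right hp.pos h1
      rw [hcK, hqb] at hble
      obtain ⟨m, hm⟩ : ∃ m, b = m + 1 := ⟨b - 1, by
        have : 0 < b := pow_pos hp.pos _
        omega⟩
      rw [hm] at hble
      have e1 : (p * (m + 1) + 1) * (m + 1 - 1) = p * (m + 1) * m + m := by
        simp
        ring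
      have e2 : p * (m + 1) ^ 2 = p * (m + 1) * m + p * (m + 1) := by ring
      have hpm : 2 * (m + 1) ≤ p * (m + 1) := Nat.mul_le_mul_right _ hp.two_le
      have hppos : 1 ≤ p * (m + 1) ^ 2 := Nat.mul_pos hp.pos (by positivity)
      omega
    obtain ⟨i, hi⟩ := hex
    refine ⟨i, (hKiff i).mpr hi, ?_⟩
    intro j hj
    by_contra hne
    exact huniq j i hne ((hKiff j).mp hj) hi
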